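/- If v is a vertex of a finite graph G and C is a cycle (ring) in G passing through v, then C is a primitive ring of the local environment B_r(v) (the subgraph induced on vertices within distance r of v, for any r at least the length of C) if and only if C is a primitive ring of G. That is, for rings containing the root, primitivity in the local atomic environment coincides with primitivity in the whole network. -/

import Mathlib

/-- A ring (cycle) in a graph, presented as an injective cyclic sequence of pairwise
adjacent consecutive vertices. -/
def IsRing {V : Type*} (H : SimpleGraph V) {k : ℕ} (ρ : ZMod k → V) : Prop :=
  Function.Injective ρ ∧ ∀ i : ZMod k, H.Adj (ρ i) (ρ (i + 1))

/-- A ring is primitive in a graph H if for every pair of its vertices the graph distance in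
H equals the shorter of the two arc lengths along the ring. -/
def IsPrimitiveRing {V : Type*} (H : SimpleGraph V) {k : ℕ} [NeZero k] (ρ : ZMod k → V) :
    Prop :=
  IsRing H ρ ∧ ∀ i j : ZMod k, H.dist (ρ i) (ρ j) = min (j - i).val (i - j).val

/-- The ball of radius r: the subgraph induced on vertices within distance r of the root. -/
def ballSubgraph {V : Type*} (G : SimpleGraph V) (v : V) (r : ℕ) : SimpleGraph V where
  Adj a b := G.Adj a b ∧ G.dist v a ≤ r ∧ G.dist v b ≤ r
  symm := ⟨fun _ _ ⟨h, h1, h2⟩ => ⟨h.symm, h2, h1⟩⟩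
  loopless := ⟨fun a h => G.loopless.irrefl a h.1⟩

/-- Walk along a ring: from `ρ i` to `ρ (i + n)` of length `n`. -/
lemma ringWalk {V : Type*} (H : SimpleGraph V) {k : ℕ} (ρ : ZMod k → V)
    (hadj : ∀ i : ZMod k, H.Adj (ρ i) (ρ (i + 1))) (i : ZMod k) (n : ℕ) :
    ∃ p : H.Walk (ρ i) (ρ (i + (n : ZMod k))), p.length = n := by
  induction n with
  | zero =>
    exact ⟨SimpleGraph.Walk.nil.copy rfl (congrArg ρ (by push_cast; ring)), by simp⟩
  | succ n ih =>
    obtain ⟨p, hp⟩ := ih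
    exact ⟨(p.concat (hadj _)).copy rfl (congrArg ρ (by push_cast; ring)),
      by simp [hp]⟩

lemma dist_le_arc {V : Type*} (H : SimpleGraph V) {k : ℕ} [NeZero k] (ρ : ZMod k → V)
    (hadj : ∀ i : ZMod k, H.Adj (ρ i) (ρ (i + 1))) (i j : ZMod k) :
    H.dist (ρ i) (ρ j) ≤ min (j - i).val (i - j).val := by
  have key : ∀ a b : ZMod k, H.dist (ρ a) (ρ b) ≤ (b - a).val := by
    intro a b
    obtain ⟨p, hp⟩ := ringWalk H ρ hadj a (b - a).val
    have e : ρ (a + (((b - a).val : ℕ) : ZMod k)) = ρ b := by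
      congr 1
      rw [ZMod.natCast_val, ZMod.cast_id]
      ring
    have := SimpleGraph.dist_le (p.copy rfl e)
    simpa [hp] using this
  refine le_min (key i j) ?_
  rw [SimpleGraph.dist_comm]
  exact key j i

lemma arc_le_half {k : ℕ} [NeZero k] (i j : ZMod k) :
    min (j - i).val (i - j).val ≤ k / 2 := by
  by_cases h : i = j
  · simp [h]
  · have hne : j - i ≠ 0 := sub_ne_zero.mpr (Ne.symm h)
    have : i - j = -(j - i) := by ring
    rw [this]
    have : NeZero (j - i) := ⟨hne⟩
    rw [ZMod.val_neg_of_ne_zero]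
    have h1 : (j - i).val < k := ZMod.val_lt _
    have h2 : (j - i).val ≠ 0 := by
      simpa [ZMod.val_eq_zero] using hne
    omega

lemma ring_reachable {V : Type*} (H : SimpleGraph V) {k : ℕ} [NeZero k] (ρ : ZMod k → V)
    (hadj : ∀ i : ZMod k, H.Adj (ρ i) (ρ (i + 1))) (i j : ZMod k) :
    H.Reachable (ρ i) (ρ j) := by
  obtain ⟨p, _⟩ := ringWalk H ρ hadj i (j - i).val
  have e : ρ (i + (((j - i).val : ℕ) : ZMod k)) = ρ j := by
    congr 1
    rw [ZMod.natCast_val, ZMod.cast_id]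
    ring
  exact ⟨p.copy rfl e⟩

/-- For a ring C through a vertex v of a finite graph G, C is a primitive ring of the local
environment B_r(v) (for any r at least the length of C, with all vertices of C in B_r(v))
if and only if C is a primitive ring of G. -/
theorem statement7 {V : Type*} [Fintype V] (G : SimpleGraph V) (v : V) (k r : ℕ)
    [NeZero k] (hk : 3 ≤ k) (hrk : k ≤ r) (ρ : ZMod k → V)
    (hring : IsRing G ρ)
    (hroot : ∃ i : ZMod k, ρ i = v)
    (hball : ∀ i : ZMod k, G.dist v (ρ i) ≤ r) :
    IsPrimitiveRing (ballSubgraph G v r) ρ ↔ IsPrimitiveRing G ρ := by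
  obtain ⟨hinj, hadj⟩ := hring
  obtain ⟨i₀, hi₀⟩ := hroot
  -- adjacency of the ring inside the ball
  have hadjB : ∀ i : ZMod k, (ballSubgraph G v r).Adj (ρ i) (ρ (i + 1)) :=
    fun i => ⟨hadj i, hball i, hball (i + 1)⟩
  -- distance from the root to any ring vertex is at most k/2
  have hv_half : ∀ i : ZMod k, G.dist v (ρ i) ≤ k / 2 := by
    intro i
    calc G.dist v (ρ i) = G.dist (ρ i₀) (ρ i) := by rw [hi₀]
    _ ≤ min (i - i₀).val (i₀ - i).val := dist_le_arc G ρ hadj i₀ i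
    _ ≤ k / 2 := arc_le_half i₀ i
  -- key: distances between ring vertices agree in G and in the ball
  have hdist_eq : ∀ i j : ZMod k,
      (ballSubgraph G v r).dist (ρ i) (ρ j) = G.dist (ρ i) (ρ j) := by
    intro i j
    refine le_antisymm ?_ ?_
    · -- ball dist ≤ G dist: a G-geodesic stays inside the ball
      have hreach : G.Reachable (ρ i) (ρ j) := ring_reachable G ρ hadj i j
      obtain ⟨p, hp⟩ := hreach.exists_walk_length_eq_dist
      have hd_half : p.length ≤ k / 2 := by
        rw [hp]
        exact le_trans (dist_le_arc G ρ hadj i j) (arc_le_half i j)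
      -- every support vertex of p is within distance r of v
      have hsupp : ∀ w ∈ p.support, G.dist v w ≤ r := by
        intro w hw
        obtain ⟨q, q', hqq⟩ := SimpleGraph.Walk.mem_support_iff_exists_append.mp hw
        have hlen : q.length + q'.length = p.length := by
          rw [hqq, SimpleGraph.Walk.length_append]
        -- via ρ i
        obtain ⟨pa, hpa⟩ := (ring_reachable G ρ hadj i₀ i).exists_walk_length_eq_dist
        have h1 : G.dist v w ≤ G.dist (ρ i₀) (ρ i) + q.length := by
          have := SimpleGraph.dist_le ((pa.append q).copy (by rw [hi₀]) rfl)
          simpa [hpa] using this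
        -- via ρ j
        obtain ⟨pb, hpb⟩ := (ring_reachable G ρ hadj i₀ j).exists_walk_length_eq_dist
        have h2 : G.dist v w ≤ G.dist (ρ i₀) (ρ j) + q'.length := by
          have := SimpleGraph.dist_le ((pb.append q'.reverse).copy (by rw [hi₀]) rfl)
          simpa [hpb] using this
        have hvi : G.dist (ρ i₀) (ρ i) ≤ k / 2 := hi₀ ▸ hv_half i
        have hvj : G.dist (ρ i₀) (ρ j) ≤ k / 2 := hi₀ ▸ hv_half j
        omega
      -- transfer p to the ball
      have hedges : ∀ e ∈ p.edges, e ∈ (ballSubgraph G v r).edgeSet := by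
        intro e he
        induction e with
        | h a b =>
          exact ⟨p.edges_subset_edgeSet he,
            hsupp a (p.fst_mem_support_of_mem_edges he),
            hsupp b (p.snd_mem_support_of_mem_edges he)⟩
      have := SimpleGraph.dist_le (p.transfer _ hedges)
      rwa [SimpleGraph.Walk.length_transfer, hp] at this
    · -- G dist ≤ ball dist: a ball walk is a G walk
      have hreachB : (ballSubgraph G v r).Reachable (ρ i) (ρ j) :=
        ring_reachable _ ρ hadjB i j
      obtain ⟨q, hq⟩ := hreachB.exists_walk_length_eq_dist
      have hle : ballSubgraph G v r ≤ G := fun a b h => h.1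
      have := SimpleGraph.dist_le (q.mapLe hle)
      simpa [SimpleGraph.Walk.mapLe, hq] using this
  constructor
  · rintro ⟨-, hP⟩
    exact ⟨⟨hinj, hadj⟩, fun i j => (hdist_eq i j) ▸ hP i j⟩
  · rintro ⟨-, hP⟩
    exact ⟨⟨hinj, hadjB⟩, fun i j => (hdist_eq i j).trans (hP i j)⟩
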